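/- Let 1 < p < ∞. There exist constants c, C > 0 depending only on p such that for every ε ∈ (0,1), the weight w(x) := |x|^{ε−1} on ℝ satisfies c·ε^{−1} ≤ [w]_{A_p} ≤ C·ε^{−1}, where [w]_{A_p} := sup over all bounded intervals I of ⟨w⟩_I ⟨w^{1−p'}⟩_I^{p−1}. -/

import Mathlib

open MeasureTheory ENNReal NNReal Set

noncomputable section

namespace Paper1D

/-- The dyadic interval `[2^{-k} m, 2^{-k}(m+1))`. -/
def dyadicI (k m : ℤ) : Set ℝ := Set.Ico ((2:ℝ) ^ (-k) * m) ((2:ℝ) ^ (-k) * (m + 1))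

/-- The Haar function `h_I = |I|^{-1/2} (1_{I_-} - 1_{I_+})` of the dyadic
interval `I = [2^{-k} m, 2^{-k}(m+1))`. -/
def haar (k m : ℤ) (x : ℝ) : ℝ :=
  (2:ℝ) ^ ((k : ℝ) / 2) *
    (Set.indicator (Set.Ico ((2:ℝ) ^ (-k) * m) ((2:ℝ) ^ (-k) * (m + 1/2))) (fun _ => (1:ℝ)) x
      - Set.indicator (Set.Ico ((2:ℝ) ^ (-k) * (m + 1/2)) ((2:ℝ) ^ (-k) * (m + 1))) (fun _ => (1:ℝ)) x)

/-- The Haar square function `Sf = (∑_I (1_I/|I|) |⟨h_I, f⟩|²)^{1/2}`. -/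
def haarSq (f : ℝ → ℝ) (x : ℝ) : ℝ≥0∞ :=
  (∑' km : ℤ × ℤ, (dyadicI km.1 km.2).indicator
      (fun _ => (volume (dyadicI km.1 km.2))⁻¹ *
        (‖∫ y, haar km.1 km.2 y * f y‖₊ : ℝ≥0∞) ^ 2) x) ^ (1/2 : ℝ)

/-- `‖f‖_{L^p(w)} = (∫ |f|^p w)^{1/p}`. -/
def lpNorm1 (p : ℝ) (w : ℝ → ℝ≥0∞) (f : ℝ → ℝ) : ℝ≥0∞ :=
  (∫⁻ x, (‖f x‖₊ : ℝ≥0∞) ^ p * w x) ^ (1/p)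

/-- `‖g‖_{L^{p,∞}(w)} = sup_{t>0} t · w({g > t})^{1/p}`. -/
def wLpNorm1 (p : ℝ) (w : ℝ → ℝ≥0∞) (g : ℝ → ℝ≥0∞) : ℝ≥0∞ :=
  ⨆ (t : ℝ≥0) (_ : 0 < t), (t : ℝ≥0∞) * (∫⁻ x in {x | (t : ℝ≥0∞) < g x}, w x) ^ (1/p)

/-- `‖S‖_{L^p(w) → L^{p,∞}(w)}`, the least constant `C` such that
`‖Sf‖_{L^{p,∞}(w)} ≤ C ‖f‖_{L^p(w)}` for all `f ∈ L^p(w)`. -/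
def sqOpNorm (p : ℝ) (w : ℝ → ℝ≥0∞) : ℝ≥0∞ :=
  sInf {C : ℝ≥0∞ | ∀ f : ℝ → ℝ, Measurable f → lpNorm1 p w f ≠ ∞ →
    wLpNorm1 p w (haarSq f) ≤ C * lpNorm1 p w f}

/-- Average `⟨w⟩_I = |I|⁻¹ ∫_I w`. -/
def avg1 (w : ℝ → ℝ≥0∞) (I : Set ℝ) : ℝ≥0∞ := (volume I)⁻¹ * ∫⁻ x in I, w x

/-- The dyadic `A_p` characteristic, with the dual weight `σ = w^{1-p'}`. -/
def Ap1 (p : ℝ) (w : ℝ → ℝ≥0∞) : ℝ≥0∞ :=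
  ⨆ km : ℤ × ℤ, avg1 w (dyadicI km.1 km.2) *
    (avg1 (fun x => (w x) ^ (1 - p / (p - 1))) (dyadicI km.1 km.2)) ^ (p - 1)


lemma K1 (R t : ℝ) (hR : 0 < R) (ht : -1 < t) :
    ∫⁻ x in Set.Ioo 0 R, ENNReal.ofReal (x ^ t) = ENNReal.ofReal (R ^ (t+1) / (t+1)) := by
  have hint : IntegrableOn (fun x : ℝ => x ^ t) (Set.Ioo 0 R) := by
    have := (intervalIntegral.intervalIntegrable_rpow' (a := 0) (b := R) ht)
    rw [intervalIntegrable_iff_integrableOn_Ioo_of_le hR.le] at this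
    exact this
  rw [← ofReal_integral_eq_lintegral_ofReal hint]
  · congr 1
    have h2 : ∫ x in Set.Ioo 0 R, x ^ t = ∫ x in (0:ℝ)..R, x ^ t := by
      rw [intervalIntegral.integral_of_le hR.le, MeasureTheory.integral_Ioc_eq_integral_Ioo]
    rw [h2, integral_rpow (Or.inl ht)]
    rw [Real.zero_rpow (by linarith : t + 1 ≠ 0)]
    ring
  · filter_upwards [ae_restrict_mem measurableSet_Ioo] with x hx
    exact Real.rpow_nonneg hx.1.le t

lemma K2 (R t : ℝ) (hR : 0 < R) (ht : -1 < t) :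
    ∫⁻ x in Set.Ioo (-R) R, ENNReal.ofReal (|x| ^ t)
      = ENNReal.ofReal (2 * (R ^ (t+1) / (t+1))) := by
  have hsplit : Set.Ioo (-R) R = Set.Ioo (-R) 0 ∪ Set.Ico 0 R := by
    ext x; simp only [Set.mem_Ioo, Set.mem_union, Set.mem_Ico]
    constructor
    · rintro ⟨h1, h2⟩; rcases lt_or_ge x 0 with h | h
      · exact Or.inl ⟨h1, h⟩
      · exact Or.inr ⟨h, h2⟩
    · rintro (⟨h1, h2⟩ | ⟨h1, h2⟩) <;> constructor <;> linarith
  have hdisj : Disjoint (Set.Ioo (-R) 0) (Set.Ico 0 R) := by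
    apply Set.disjoint_left.2; rintro x ⟨_, h2⟩ ⟨h3, _⟩; linarith
  rw [hsplit, lintegral_union measurableSet_Ico hdisj]
  have hK1 : ∀ s : ℝ, -1 < s → ∫⁻ x in Set.Ioo 0 R, ENNReal.ofReal (x ^ s) = ENNReal.ofReal (R ^ (s+1) / (s+1)) := by
    intro s hs
    have hint : IntegrableOn (fun x : ℝ => x ^ s) (Set.Ioo 0 R) := by
      have := (intervalIntegral.intervalIntegrable_rpow' (a := 0) (b := R) hs)
      rwa [intervalIntegrable_iff_integrableOn_Ioo_of_le hR.le] at this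
    rw [← ofReal_integral_eq_lintegral_ofReal hint]
    · congr 1
      have h2 : ∫ x in Set.Ioo 0 R, x ^ s = ∫ x in (0:ℝ)..R, x ^ s := by
        rw [intervalIntegral.integral_of_le hR.le, MeasureTheory.integral_Ioc_eq_integral_Ioo]
      rw [h2, integral_rpow (Or.inl hs), Real.zero_rpow (by linarith : s + 1 ≠ 0)]
      ring
    · filter_upwards [ae_restrict_mem measurableSet_Ioo] with x hx
      exact Real.rpow_nonneg hx.1.le s
  have habs : ∫⁻ x in Set.Ioo 0 R, ENNReal.ofReal (|x| ^ t) = ENNReal.ofReal (R ^ (t+1) / (t+1)) := by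
    rw [← hK1 t ht]
    apply setLIntegral_congr_fun_ae measurableSet_Ioo
    filter_upwards with x hx
    rw [abs_of_pos hx.1]
  have hneg : ∫⁻ x in Set.Ioo (-R) 0, ENNReal.ofReal (|x| ^ t) = ENNReal.ofReal (R ^ (t+1) / (t+1)) := by
    have h := (Measure.measurePreserving_neg (volume : Measure ℝ)).setLIntegral_comp_preimage_emb
      (MeasurableEquiv.neg ℝ).measurableEmbedding (fun y => ENNReal.ofReal (|y| ^ t)) (Set.Ioo (-R) 0)
    have hpre : (Neg.neg ⁻¹' Set.Ioo (-R) 0 : Set ℝ) = Set.Ioo 0 R := by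
      ext x; simp only [Set.mem_preimage, Set.mem_Ioo]
      constructor <;> rintro ⟨h1, h2⟩ <;> exact ⟨by linarith, by linarith⟩
    rw [hpre] at h
    rw [← h, ← habs]
    apply lintegral_congr
    intro x
    simp [abs_neg]
  have hico : ∫⁻ x in Set.Ico 0 R, ENNReal.ofReal (|x| ^ t) = ENNReal.ofReal (R ^ (t+1) / (t+1)) := by
    rw [← habs]
    exact setLIntegral_congr MeasureTheory.Ioo_ae_eq_Ico.symm
  have hnn : 0 ≤ R ^ (t+1) / (t+1) := div_nonneg (Real.rpow_nonneg hR.le _) (by linarith)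
  rw [hneg, hico, ← ENNReal.ofReal_add hnn hnn]
  congr 1; ring

lemma avg_le_const {S : Set ℝ} (hS : MeasurableSet S) {f : ℝ → ℝ≥0∞} {C : ℝ≥0∞}
    (hvol0 : volume S ≠ 0) (hvolt : volume S ≠ ⊤) (h : ∀ x ∈ S, f x ≤ C) :
    (volume S)⁻¹ * ∫⁻ x in S, f x ≤ C := by
  calc (volume S)⁻¹ * ∫⁻ x in S, f x
      ≤ (volume S)⁻¹ * ∫⁻ _ in S, C := by
        exact mul_le_mul_right (setLIntegral_mono' hS h) _
    _ = (volume S)⁻¹ * (C * volume S) := by rw [setLIntegral_const]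
    _ = C * ((volume S)⁻¹ * volume S) := by ring
    _ = C := by rw [ENNReal.inv_mul_cancel hvol0 hvolt, mul_one]

lemma core {p ε : ℝ} (hp : 1 < p) (hε0 : 0 < ε) (hε1 : ε < 1) {a b : ℝ} (hab : a < b) :
    ((volume (Set.Ioo a b))⁻¹ * ∫⁻ x in Set.Ioo a b, ENNReal.ofReal (|x| ^ (ε-1))) *
      ((volume (Set.Ioo a b))⁻¹ * ∫⁻ x in Set.Ioo a b,
        (ENNReal.ofReal (|x| ^ (ε-1))) ^ (1 - p/(p-1))) ^ (p-1)
      ≤ ENNReal.ofReal (3 ^ (p+1)) * (ENNReal.ofReal ε)⁻¹ := by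
  have hp1 : 0 < p - 1 := by linarith
  set d : ℝ := (1-ε)/(p-1) with hd
  have hd0 : 0 < d := div_pos (by linarith) hp1
  have hdp : d * (p - 1) = 1 - ε := by rw [hd]; field_simp
  have hσ : ∀ x : ℝ, x ≠ 0 →
      (ENNReal.ofReal (|x| ^ (ε-1))) ^ (1 - p/(p-1)) = ENNReal.ofReal (|x| ^ d) := by
    intro x hx
    have hx0 : 0 < |x| := abs_pos.2 hx
    have h1 : (|x| ^ (ε-1)) ^ (1 - p/(p-1)) = |x| ^ d := by
      rw [← Real.rpow_mul (abs_nonneg x)]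
      rw [hd]
      field_simp
      congr 1; ring
    rw [ENNReal.ofReal_rpow_of_pos (Real.rpow_pos_of_pos hx0 _), h1]
  have hvol : volume (Set.Ioo a b) = ENNReal.ofReal (b - a) := Real.volume_Ioo
  have hba : 0 < b - a := by linarith
  have hv0 : volume (Set.Ioo a b) ≠ 0 := by
    rw [hvol]; exact (ENNReal.ofReal_pos.2 hba).ne'
  have hvt : volume (Set.Ioo a b) ≠ ⊤ := by rw [hvol]; exact ENNReal.ofReal_ne_top
  set m : ℝ := (a+b)/2 with hm
  set r : ℝ := (b-a)/2 with hrdef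
  have hr : 0 < r := by simp only [hrdef]; linarith
  have hxm : ∀ x ∈ Set.Ioo a b, |x - m| < r := by
    intro x hx
    rw [abs_lt]
    constructor <;> simp only [hm, hrdef] <;> cases hx <;> linarith
  have h1inv : (1:ℝ≥0∞) ≤ (ENNReal.ofReal ε)⁻¹ := by
    rw [ENNReal.one_le_inv]
    exact ENNReal.ofReal_le_one.2 hε1.le
  rcases le_or_gt (2*r) |m| with hc | hc
  · -- Case A: away from origin
    have hm0 : 0 < |m| := lt_of_lt_of_le (by linarith) hc
    have hxb : ∀ x ∈ Set.Ioo a b, |m|/2 ≤ |x| ∧ |x| ≤ 3/2 * |m| := by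
      intro x hx
      have h1 := hxm x hx
      have h2 : |m| - |x| ≤ |x - m| := by
        have := abs_sub_abs_le_abs_sub m x
        rwa [abs_sub_comm] at this
      have h3 : |x| - |m| ≤ |x - m| := abs_sub_abs_le_abs_sub x m
      constructor <;> linarith
    have hW : (volume (Set.Ioo a b))⁻¹ * ∫⁻ x in Set.Ioo a b, ENNReal.ofReal (|x| ^ (ε-1))
        ≤ ENNReal.ofReal ((|m|/2) ^ (ε-1)) := by
      refine avg_le_const measurableSet_Ioo hv0 hvt fun x hx => ?_
      exact ENNReal.ofReal_le_ofReal
        (Real.rpow_le_rpow_of_nonpos (by positivity) (hxb x hx).1 (by linarith))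
    have hS : (volume (Set.Ioo a b))⁻¹ * ∫⁻ x in Set.Ioo a b,
        (ENNReal.ofReal (|x| ^ (ε-1))) ^ (1 - p/(p-1))
        ≤ ENNReal.ofReal ((3/2 * |m|) ^ d) := by
      refine avg_le_const measurableSet_Ioo hv0 hvt fun x hx => ?_
      have hx0 : x ≠ 0 := by
        intro h
        have := (hxb x hx).1
        rw [h, abs_zero] at this
        linarith
      rw [hσ x hx0]
      exact ENNReal.ofReal_le_ofReal (Real.rpow_le_rpow (abs_nonneg x) (hxb x hx).2 hd0.le)
    have hreal : (|m|/2) ^ (ε-1) * ((3/2 * |m|) ^ d) ^ (p-1) ≤ 3 ^ (p+1) := by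
      set M : ℝ := |m|/2 with hM
      have hM0 : 0 < M := by positivity
      have e0 : (3:ℝ)/2 * |m| = 3 * M := by rw [hM]; ring
      have e1 : ((3*M) ^ d) ^ (p-1) = (3*M) ^ (1-ε) := by
        rw [← Real.rpow_mul (by positivity), hdp]
      have e2 : (3*M) ^ (1-ε) = 3 ^ (1-ε) * M ^ (1-ε) := Real.mul_rpow (by norm_num) hM0.le
      have e3 : M ^ (ε-1) * M ^ (1-ε) = 1 := by
        rw [← Real.rpow_add hM0]
        norm_num
      calc M ^ (ε-1) * ((3/2 * |m|) ^ d) ^ (p-1)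
          = M ^ (ε-1) * (3 ^ (1-ε) * M ^ (1-ε)) := by rw [e0, e1, e2]
        _ = 3 ^ (1-ε) * (M ^ (ε-1) * M ^ (1-ε)) := by ring
        _ = 3 ^ (1-ε) := by rw [e3, mul_one]
        _ ≤ 3 ^ (p+1) := Real.rpow_le_rpow_of_exponent_le (by norm_num) (by linarith)
    calc ((volume (Set.Ioo a b))⁻¹ * ∫⁻ x in Set.Ioo a b, ENNReal.ofReal (|x| ^ (ε-1))) *
        ((volume (Set.Ioo a b))⁻¹ * ∫⁻ x in Set.Ioo a b,
          (ENNReal.ofReal (|x| ^ (ε-1))) ^ (1 - p/(p-1))) ^ (p-1)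
        ≤ ENNReal.ofReal ((|m|/2) ^ (ε-1)) * (ENNReal.ofReal ((3/2 * |m|) ^ d)) ^ (p-1) :=
          mul_le_mul' hW (ENNReal.rpow_le_rpow hS (by linarith))
      _ = ENNReal.ofReal ((|m|/2) ^ (ε-1) * ((3/2 * |m|) ^ d) ^ (p-1)) := by
          rw [ENNReal.ofReal_rpow_of_nonneg (Real.rpow_nonneg (by positivity) _) (by linarith),
            ← ENNReal.ofReal_mul (Real.rpow_nonneg (by positivity) _)]
      _ ≤ ENNReal.ofReal (3 ^ (p+1)) := ENNReal.ofReal_le_ofReal hreal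
      _ = ENNReal.ofReal (3 ^ (p+1)) * 1 := (mul_one _).symm
      _ ≤ ENNReal.ofReal (3 ^ (p+1)) * (ENNReal.ofReal ε)⁻¹ := mul_le_mul_right h1inv _
  · -- Case B: near origin
    have hsub : Set.Ioo a b ⊆ Set.Ioo (-(3*r)) (3*r) := by
      intro x hx
      have h1 := hxm x hx
      have h2 : |x| ≤ |x - m| + |m| := by
        calc |x| = |x - m + m| := by ring_nf
          _ ≤ |x - m| + |m| := abs_add_le _ _
      have h3 : |x| < 3 * r := by linarith
      rw [abs_lt] at h3
      exact ⟨h3.1, h3.2⟩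
    have hba2 : b - a = 2 * r := by rw [hrdef]; ring
    have h3r : (0:ℝ) < 3 * r := by linarith
    have hIw : ∫⁻ x in Set.Ioo a b, ENNReal.ofReal (|x| ^ (ε-1))
        ≤ ENNReal.ofReal (2 * ((3*r) ^ ε / ε)) := by
      refine le_trans (lintegral_mono_set hsub) ?_
      rw [K2 (3*r) (ε-1) h3r (by linarith)]
      have : ε - 1 + 1 = ε := by ring
      rw [this]
    have hIσ : ∫⁻ x in Set.Ioo a b, (ENNReal.ofReal (|x| ^ (ε-1))) ^ (1 - p/(p-1))
        ≤ ENNReal.ofReal (2 * ((3*r) ^ (d+1) / (d+1))) := by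
      refine le_trans (lintegral_mono_set hsub) ?_
      have hcongr : ∫⁻ x in Set.Ioo (-(3*r)) (3*r),
          (ENNReal.ofReal (|x| ^ (ε-1))) ^ (1 - p/(p-1))
          = ∫⁻ x in Set.Ioo (-(3*r)) (3*r), ENNReal.ofReal (|x| ^ d) := by
        apply setLIntegral_congr_fun_ae measurableSet_Ioo
        have h0 : ∀ᵐ (x:ℝ), x ≠ (0:ℝ) := by
          refine compl_mem_ae_iff.2 ?_
          exact measure_mono_null (fun x hx => by rw [Set.mem_singleton_iff]; exact hx) (measure_singleton (0:ℝ))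
        filter_upwards [h0] with x hx0 _
        exact hσ x hx0
      rw [hcongr, K2 (3*r) d h3r (by linarith)]
    have hAB : ((volume (Set.Ioo a b))⁻¹ * ∫⁻ x in Set.Ioo a b, ENNReal.ofReal (|x| ^ (ε-1))) *
        ((volume (Set.Ioo a b))⁻¹ * ∫⁻ x in Set.Ioo a b,
          (ENNReal.ofReal (|x| ^ (ε-1))) ^ (1 - p/(p-1))) ^ (p-1)
        ≤ ENNReal.ofReal (2 * ((3*r) ^ ε / ε) / (2*r)) *
          (ENNReal.ofReal (2 * ((3*r) ^ (d+1) / (d+1)) / (2*r))) ^ (p-1) := by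
      have hw' : (volume (Set.Ioo a b))⁻¹ * ∫⁻ x in Set.Ioo a b, ENNReal.ofReal (|x| ^ (ε-1))
          ≤ ENNReal.ofReal (2 * ((3*r) ^ ε / ε) / (2*r)) := by
        rw [hvol, hba2]
        calc (ENNReal.ofReal (2*r))⁻¹ * ∫⁻ x in Set.Ioo a b, ENNReal.ofReal (|x| ^ (ε-1))
            ≤ (ENNReal.ofReal (2*r))⁻¹ * ENNReal.ofReal (2 * ((3*r) ^ ε / ε)) :=
              mul_le_mul_right hIw _
          _ = ENNReal.ofReal (2 * ((3*r) ^ ε / ε) / (2*r)) := by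
              rw [ENNReal.ofReal_div_of_pos (by linarith : (0:ℝ) < 2*r), ENNReal.div_eq_inv_mul]
      have hσ' : (volume (Set.Ioo a b))⁻¹ * ∫⁻ x in Set.Ioo a b,
          (ENNReal.ofReal (|x| ^ (ε-1))) ^ (1 - p/(p-1))
          ≤ ENNReal.ofReal (2 * ((3*r) ^ (d+1) / (d+1)) / (2*r)) := by
        rw [hvol, hba2]
        calc (ENNReal.ofReal (2*r))⁻¹ * ∫⁻ x in Set.Ioo a b,
              (ENNReal.ofReal (|x| ^ (ε-1))) ^ (1 - p/(p-1))
            ≤ (ENNReal.ofReal (2*r))⁻¹ * ENNReal.ofReal (2 * ((3*r) ^ (d+1) / (d+1))) :=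
              mul_le_mul_right hIσ _
          _ = ENNReal.ofReal (2 * ((3*r) ^ (d+1) / (d+1)) / (2*r)) := by
              rw [ENNReal.ofReal_div_of_pos (by linarith : (0:ℝ) < 2*r), ENNReal.div_eq_inv_mul]
      exact mul_le_mul' hw' (ENNReal.rpow_le_rpow hσ' (by linarith))
    set A : ℝ := 2 * ((3*r) ^ ε / ε) / (2*r) with hA
    set B : ℝ := 2 * ((3*r) ^ (d+1) / (d+1)) / (2*r) with hB
    have hAnn : 0 ≤ A := by positivity
    have hBnn : 0 ≤ B := by positivity
    have hreal : A * B ^ (p-1) ≤ 3 ^ (p+1) / ε := by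
      have h3rpow : ∀ t : ℝ, (3*r) ^ t = 3 ^ t * r ^ t := fun t => Real.mul_rpow (by norm_num) hr.le
      have hAe : A = 3 ^ ε * r ^ (ε-1) / ε := by
        rw [hA, h3rpow]
        have : r ^ ε = r ^ (ε-1) * r := by
          rw [← Real.rpow_add_one hr.ne' (ε-1)]
          norm_num
        rw [this]
        field_simp
      have hBle : B ≤ 3 ^ (d+1) * r ^ d := by
        rw [hB, h3rpow]
        have : r ^ (d+1) = r ^ d * r := Real.rpow_add_one hr.ne' d
        rw [this]
        rw [div_le_iff₀ (by linarith : (0:ℝ) < 2*r)]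
        have h1 : (1:ℝ) ≤ d + 1 := by linarith
        have : 2 * (3 ^ (d+1) * (r ^ d * r) / (d+1)) ≤ 2 * (3 ^ (d+1) * (r ^ d * r)) := by
          apply mul_le_mul_of_nonneg_left _ (by norm_num)
          apply div_le_self (by positivity) h1
        calc 2 * (3 ^ (d+1) * (r ^ d * r) / (d+1)) ≤ 2 * (3 ^ (d+1) * (r ^ d * r)) := this
          _ = 3 ^ (d+1) * r ^ d * (2*r) := by ring
      have hBp : B ^ (p-1) ≤ 3 ^ ((d+1)*(p-1)) * r ^ (d*(p-1)) := by
        calc B ^ (p-1) ≤ (3 ^ (d+1) * r ^ d) ^ (p-1) :=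
              Real.rpow_le_rpow hBnn hBle (by linarith)
          _ = (3 ^ (d+1)) ^ (p-1) * (r ^ d) ^ (p-1) :=
              Real.mul_rpow (by positivity) (by positivity)
          _ = 3 ^ ((d+1)*(p-1)) * r ^ (d*(p-1)) := by
              rw [← Real.rpow_mul (by norm_num), ← Real.rpow_mul hr.le]
      have hexp1 : (d+1)*(p-1) = p - ε := by
        have : d * (p-1) = 1 - ε := hdp
        nlinarith
      have hexp2 : d*(p-1) = 1 - ε := hdp
      rw [hexp1, hexp2] at hBp
      calc A * B ^ (p-1) ≤ (3 ^ ε * r ^ (ε-1) / ε) * (3 ^ (p-ε) * r ^ (1-ε)) := by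
            rw [hAe]
            exact mul_le_mul_of_nonneg_left hBp (by positivity)
        _ = (3 ^ ε * 3 ^ (p-ε)) * (r ^ (ε-1) * r ^ (1-ε)) / ε := by ring
        _ = 3 ^ p / ε := by
            rw [← Real.rpow_add (by norm_num : (0:ℝ) < 3), ← Real.rpow_add hr]
            norm_num
        _ ≤ 3 ^ (p+1) / ε := by
            have h3 : (3:ℝ) ^ p ≤ 3 ^ (p+1) :=
              Real.rpow_le_rpow_of_exponent_le (by norm_num) (by linarith)
            exact (div_le_div_iff_of_pos_right hε0).2 h3
    calc ((volume (Set.Ioo a b))⁻¹ * ∫⁻ x in Set.Ioo a b, ENNReal.ofReal (|x| ^ (ε-1))) *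
        ((volume (Set.Ioo a b))⁻¹ * ∫⁻ x in Set.Ioo a b,
          (ENNReal.ofReal (|x| ^ (ε-1))) ^ (1 - p/(p-1))) ^ (p-1)
        ≤ ENNReal.ofReal A * (ENNReal.ofReal B) ^ (p-1) := hAB
      _ = ENNReal.ofReal (A * B ^ (p-1)) := by
          rw [ENNReal.ofReal_rpow_of_nonneg hBnn (by linarith), ← ENNReal.ofReal_mul hAnn]
      _ ≤ ENNReal.ofReal (3 ^ (p+1) / ε) := ENNReal.ofReal_le_ofReal hreal
      _ = ENNReal.ofReal (3 ^ (p+1)) * (ENNReal.ofReal ε)⁻¹ := by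
          rw [ENNReal.ofReal_div_of_pos hε0, div_eq_mul_inv]

lemma interval_ae {I : Set ℝ} (hc : I.OrdConnected) (hb : Bornology.IsBounded I)
    (h0 : volume I ≠ 0) : ∃ a b : ℝ, a < b ∧ I =ᵐ[volume] Set.Ioo a b := by
  obtain ⟨hbd, hba⟩ := isBounded_iff_bddBelow_bddAbove.1 hb
  have hne : I.Nonempty := nonempty_of_measure_ne_zero h0
  set a := sInf I with hadef
  set b := sSup I with hbdef
  have hsubIcc : I ⊆ Set.Icc a b := fun x hx => ⟨csInf_le hbd hx, le_csSup hba hx⟩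
  have hab : a < b := by
    by_contra h
    push_neg at h
    have h1 : volume I ≤ volume (Set.Icc a b) := measure_mono hsubIcc
    rw [Real.volume_Icc] at h1
    have h2 : ENNReal.ofReal (b - a) = 0 := ENNReal.ofReal_eq_zero.2 (by linarith)
    exact h0 (le_antisymm (h1.trans h2.le) zero_le)
  have hsupIoo : Set.Ioo a b ⊆ I := by
    intro x hx
    obtain ⟨y, hyI, hyx⟩ := (csInf_lt_iff hbd hne).1 hx.1
    obtain ⟨z, hzI, hxz⟩ := (lt_csSup_iff hba hne).1 hx.2
    exact hc.out hyI hzI ⟨hyx.le, hxz.le⟩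
  refine ⟨a, b, hab, ?_⟩
  rw [MeasureTheory.ae_eq_set]
  constructor
  · refine measure_mono_null (fun x hx => ?_)
      (((Set.finite_singleton b).insert a).measure_zero volume)
    obtain ⟨hxI, hxn⟩ := hx
    obtain ⟨h1, h2⟩ := hsubIcc hxI
    simp only [Set.mem_Ioo, not_and_or, not_lt] at hxn
    rcases hxn with h | h
    · exact Set.mem_insert_iff.2 (Or.inl (le_antisymm h h1))
    · exact Set.mem_insert_iff.2 (Or.inr (by simp [le_antisymm h2 h]))
  · rw [Set.diff_eq_empty.2 hsupIoo]
    simp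

lemma lower {p ε : ℝ} (hp : 1 < p) (hε0 : 0 < ε) (hε1 : ε < 1) :
    ENNReal.ofReal (((p-1)/p) ^ (p-1)) * (ENNReal.ofReal ε)⁻¹ ≤
      ((volume (Set.Ico (0:ℝ) 1))⁻¹ * ∫⁻ x in Set.Ico (0:ℝ) 1, ENNReal.ofReal (|x| ^ (ε-1))) *
        ((volume (Set.Ico (0:ℝ) 1))⁻¹ * ∫⁻ x in Set.Ico (0:ℝ) 1,
          (ENNReal.ofReal (|x| ^ (ε-1))) ^ (1 - p/(p-1))) ^ (p-1) := by
  have hp1 : 0 < p - 1 := by linarith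
  set d : ℝ := (1-ε)/(p-1) with hd
  have hd0 : 0 < d := div_pos (by linarith) hp1
  have hσ : ∀ x : ℝ, x ≠ 0 →
      (ENNReal.ofReal (|x| ^ (ε-1))) ^ (1 - p/(p-1)) = ENNReal.ofReal (|x| ^ d) := by
    intro x hx
    have hx0 : 0 < |x| := abs_pos.2 hx
    have h1 : (|x| ^ (ε-1)) ^ (1 - p/(p-1)) = |x| ^ d := by
      rw [← Real.rpow_mul (abs_nonneg x)]
      congr 1
      rw [hd]
      field_simp
      ring
    rw [ENNReal.ofReal_rpow_of_pos (Real.rpow_pos_of_pos hx0 _), h1]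
  have hvol : volume (Set.Ico (0:ℝ) 1) = 1 := by
    rw [Real.volume_Ico]
    norm_num
  have hIoo : ∀ f : ℝ → ℝ≥0∞, ∫⁻ x in Set.Ico (0:ℝ) 1, f x = ∫⁻ x in Set.Ioo (0:ℝ) 1, f x :=
    fun f => (setLIntegral_congr MeasureTheory.Ioo_ae_eq_Ico).symm
  have hW : (volume (Set.Ico (0:ℝ) 1))⁻¹ * ∫⁻ x in Set.Ico (0:ℝ) 1, ENNReal.ofReal (|x| ^ (ε-1))
      = (ENNReal.ofReal ε)⁻¹ := by
    rw [hvol, inv_one, one_mul, hIoo]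
    have h1 : ∫⁻ x in Set.Ioo (0:ℝ) 1, ENNReal.ofReal (|x| ^ (ε-1))
        = ∫⁻ x in Set.Ioo (0:ℝ) 1, ENNReal.ofReal (x ^ (ε-1)) := by
      apply setLIntegral_congr_fun_ae measurableSet_Ioo
      filter_upwards with x hx
      rw [abs_of_pos hx.1]
    rw [h1, K1 1 (ε-1) one_pos (by linarith)]
    have : ε - 1 + 1 = ε := by ring
    rw [this, Real.one_rpow, ← ENNReal.ofReal_inv_of_pos hε0]
    norm_num
  set q : ℝ := 1/(p-1) with hq
  have hq0 : 0 < q := by positivity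
  have hS : ENNReal.ofReal ((p-1)/p)
      ≤ (volume (Set.Ico (0:ℝ) 1))⁻¹ * ∫⁻ x in Set.Ico (0:ℝ) 1,
        (ENNReal.ofReal (|x| ^ (ε-1))) ^ (1 - p/(p-1)) := by
    rw [hvol, inv_one, one_mul, hIoo]
    have h2 : ∫⁻ x in Set.Ioo (0:ℝ) 1, ENNReal.ofReal (x ^ q)
        ≤ ∫⁻ x in Set.Ioo (0:ℝ) 1, (ENNReal.ofReal (|x| ^ (ε-1))) ^ (1 - p/(p-1)) := by
      refine setLIntegral_mono' measurableSet_Ioo fun x hx => ?_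
      rw [hσ x (ne_of_gt hx.1), abs_of_pos hx.1]
      refine ENNReal.ofReal_le_ofReal ?_
      refine Real.rpow_le_rpow_of_exponent_ge hx.1 hx.2.le ?_
      rw [hd, hq]
      exact (div_le_div_iff_of_pos_right hp1).2 (by linarith)
    refine le_trans ?_ h2
    rw [K1 1 q one_pos (by linarith)]
    rw [Real.one_rpow]
    apply ENNReal.ofReal_le_ofReal
    rw [hq]
    have he : (1:ℝ)/(p-1) + 1 = p/(p-1) := by field_simp; ring
    rw [he, one_div_div]
  calc ENNReal.ofReal (((p-1)/p) ^ (p-1)) * (ENNReal.ofReal ε)⁻¹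
      = (ENNReal.ofReal ε)⁻¹ * (ENNReal.ofReal ((p-1)/p)) ^ (p-1) := by
        rw [ENNReal.ofReal_rpow_of_nonneg (by positivity) (by linarith), mul_comm]
    _ ≤ ((volume (Set.Ico (0:ℝ) 1))⁻¹ * ∫⁻ x in Set.Ico (0:ℝ) 1, ENNReal.ofReal (|x| ^ (ε-1))) *
        ((volume (Set.Ico (0:ℝ) 1))⁻¹ * ∫⁻ x in Set.Ico (0:ℝ) 1,
          (ENNReal.ofReal (|x| ^ (ε-1))) ^ (1 - p/(p-1))) ^ (p-1) := by
        rw [hW]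
        exact mul_le_mul_right (ENNReal.rpow_le_rpow hS (by linarith)) _

/-- Section 5 example: the weight `w(x) = |x|^{ε-1}` on `ℝ` has `[w]_{A_p} ≃ ε⁻¹`,
the `A_p` characteristic being taken over all bounded intervals. -/
theorem statement18 (p : ℝ) (hp : 1 < p) :
    ∃ c C : ℝ≥0∞, 0 < c ∧ C ≠ ∞ ∧
      ∀ ε : ℝ, 0 < ε → ε < 1 →
      ∀ w : ℝ → ℝ≥0∞, (w = fun x => ENNReal.ofReal (|x| ^ (ε - 1))) →
        c * (ENNReal.ofReal ε)⁻¹ ≤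
            (⨆ (I : Set ℝ) (_ : I.OrdConnected ∧ Bornology.IsBounded I),
              avg1 w I * (avg1 (fun x => (w x) ^ (1 - p / (p - 1))) I) ^ (p - 1)) ∧
          (⨆ (I : Set ℝ) (_ : I.OrdConnected ∧ Bornology.IsBounded I),
              avg1 w I * (avg1 (fun x => (w x) ^ (1 - p / (p - 1))) I) ^ (p - 1))
            ≤ C * (ENNReal.ofReal ε)⁻¹ := by
  have hp1 : 0 < p - 1 := by linarith
  refine ⟨ENNReal.ofReal (((p-1)/p) ^ (p-1)), ENNReal.ofReal (3 ^ (p+1)),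
    ENNReal.ofReal_pos.2 (Real.rpow_pos_of_pos (div_pos hp1 (by linarith)) _),
    ENNReal.ofReal_ne_top, ?_⟩
  intro ε hε0 hε1 w hw
  subst hw
  constructor
  · refine le_trans (lower hp hε0 hε1) ?_
    refine le_iSup₂_of_le (Set.Ico (0:ℝ) 1)
      ⟨Set.ordConnected_Ico, Metric.isBounded_Ico 0 1⟩ ?_
    simp only [avg1]
    exact le_rfl
  · refine iSup₂_le fun I hI => ?_
    by_cases h0 : volume I = 0
    · have hres : ∀ f : ℝ → ℝ≥0∞, ∫⁻ x in I, f x = 0 := fun f => by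
        rw [Measure.restrict_eq_zero.2 h0, lintegral_zero_measure]
      simp only [avg1, hres, mul_zero, zero_mul]
      exact zero_le
    · obtain ⟨a, b, hab, haeq⟩ := interval_ae hI.1 hI.2 h0
      have h1 : volume I = volume (Set.Ioo a b) := measure_congr haeq
      have h2 : ∀ f : ℝ → ℝ≥0∞, ∫⁻ x in I, f x = ∫⁻ x in Set.Ioo a b, f x :=
        fun f => setLIntegral_congr haeq
      simp only [avg1, h1, h2]
      exact core hp hε0 hε1 hab


end Paper1D
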